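/- arXiv:math-ph/0606042 — 5 statements merged into one kernel-verified Lean document; each statement's English description precedes it below -/
import Mathlib

section
/- The function u(t,x) = 2/(b₀(1 + exp(2α(x+vt)))) satisfies the PDE τ·u_tt + B·u_t − κ·u_xx = λ₁u + λ₂u² + λ₃u³, provided b₀ = (−λ₂ + sqrt(λ₂² − 4λ₁λ₃))/λ₁ (with λ₁ ≠ 0 and λ₂² − 4λ₁λ₃ ≥ 0), α = −(2λ₂ + 3b₀λ₁)/(4Bvb₀) with B ≠ 0, v ≠ 0, b₀ ≠ 0, and v² = κ(2λ₂ + 3b₀λ₁)²/(4λ₂²τ + 4b₀λ₂(B² + 3λ₁τ) + b₀²λ₁(2B² + 9λ₁τ)). -/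
noncomputable def pdt (u : ℝ → ℝ → ℝ) (t x : ℝ) : ℝ := deriv (fun s => u s x) t
noncomputable def pdx (u : ℝ → ℝ → ℝ) (t x : ℝ) : ℝ := deriv (fun y => u t y) x
noncomputable def pdtt (u : ℝ → ℝ → ℝ) (t x : ℝ) : ℝ := deriv (fun s => pdt u s x) t
noncomputable def pdxx (u : ℝ → ℝ → ℝ) (t x : ℝ) : ℝ := deriv (fun y => pdx u t y) x

private lemma hd1 (b0 c d : ℝ) (hb : b0 ≠ 0) (s : ℝ) :
    HasDerivAt (fun s => 2 / (b0 * (1 + Real.exp (c * s + d))))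
      (-2 * c * Real.exp (c * s + d) / (b0 * (1 + Real.exp (c * s + d)) ^ 2)) s := by
  have hE : HasDerivAt (fun s => Real.exp (c * s + d)) (c * Real.exp (c * s + d)) s := by
    have h := (Real.hasDerivAt_exp (c * s + d)).comp s
      (((hasDerivAt_id s).const_mul c).add_const d)
    simpa [mul_comm, Function.comp_def] using h
  have hden : HasDerivAt (fun s => b0 * (1 + Real.exp (c * s + d)))
      (b0 * (c * Real.exp (c * s + d))) s := by
    simpa using ((hasDerivAt_const s (1:ℝ)).add hE).const_mul b0
  have hpos : (0:ℝ) < 1 + Real.exp (c * s + d) := by positivity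
  have hne : b0 * (1 + Real.exp (c * s + d)) ≠ 0 := mul_ne_zero hb (ne_of_gt hpos)
  have h := (hasDerivAt_const s (2:ℝ)).div hden hne
  refine h.congr_deriv ?_
  field_simp
  ring

private lemma hd2 (b0 c d : ℝ) (hb : b0 ≠ 0) (s : ℝ) :
    HasDerivAt (fun s => -2 * c * Real.exp (c * s + d) / (b0 * (1 + Real.exp (c * s + d)) ^ 2))
      (-2 * c ^ 2 * Real.exp (c * s + d) * (1 - Real.exp (c * s + d)) /
        (b0 * (1 + Real.exp (c * s + d)) ^ 3)) s := by
  have hE : HasDerivAt (fun s => Real.exp (c * s + d)) (c * Real.exp (c * s + d)) s := by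
    have h := (Real.hasDerivAt_exp (c * s + d)).comp s
      (((hasDerivAt_id s).const_mul c).add_const d)
    simpa [mul_comm, Function.comp_def] using h
  have hnum : HasDerivAt (fun s => -2 * c * Real.exp (c * s + d))
      (-2 * c * (c * Real.exp (c * s + d))) s := hE.const_mul _
  have hpos : (0:ℝ) < 1 + Real.exp (c * s + d) := by positivity
  have hden : HasDerivAt (fun s => b0 * (1 + Real.exp (c * s + d)) ^ 2)
      (b0 * (2 * (1 + Real.exp (c * s + d)) * (c * Real.exp (c * s + d)))) s := by
    have h2 : HasDerivAt (fun s => (1 + Real.exp (c * s + d)) ^ 2)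
        (2 * (1 + Real.exp (c * s + d)) * (c * Real.exp (c * s + d))) s := by
      have := ((hasDerivAt_const s (1:ℝ)).add hE).pow 2
      refine this.congr_deriv ?_
      simp
    exact h2.const_mul b0
  have hne : b0 * (1 + Real.exp (c * s + d)) ^ 2 ≠ 0 := mul_ne_zero hb (by positivity)
  have h := hnum.div hden hne
  refine h.congr_deriv ?_
  field_simp
  ring

private lemma alg_key (τ B κ lam1 lam2 lam3 b0 α v E : ℝ) (hb0 : b0 ≠ 0) (hE : (0:ℝ) < E)
    (hc1 : lam1*b0^2 + 2*lam2*b0 + 4*lam3 = 0)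
    (hc2 : 4*B*v*b0*α + 3*lam1*b0 + 2*lam2 = 0)
    (hc3 : 8*α^2*(κ - v^2*τ)*b0 = lam1*b0 + 2*lam2) :
    τ * (-2*(2*α*v)^2*E*(1-E)/(b0*(1+E)^3)) + B * (-2*(2*α*v)*E/(b0*(1+E)^2))
      - κ * (-2*(2*α)^2*E*(1-E)/(b0*(1+E)^3))
      = lam1*(2/(b0*(1+E))) + lam2*(2/(b0*(1+E)))^2 + lam3*(2/(b0*(1+E)))^3 := by
  have h1E : (1:ℝ) + E ≠ 0 := by positivity
  field_simp
  linear_combination (-1) * hc1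
    + (E*(1-E)*b0/2) * hc3
    - (E*(1+E)*b0/2) * hc2

theorem stmt_1 (τ B κ lam1 lam2 lam3 v b0 α : ℝ)
    (h1 : lam1 ≠ 0) (hdisc : lam2 ^ 2 - 4 * lam1 * lam3 ≥ 0)
    (hb0 : b0 = (-lam2 + Real.sqrt (lam2 ^ 2 - 4 * lam1 * lam3)) / lam1)
    (hB : B ≠ 0) (hv : v ≠ 0) (hb0ne : b0 ≠ 0)
    (hα : α = -(2 * lam2 + 3 * b0 * lam1) / (4 * B * v * b0))
    (hveq : v ^ 2 = κ * (2 * lam2 + 3 * b0 * lam1) ^ 2 /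
      (4 * lam2 ^ 2 * τ + 4 * b0 * lam2 * (B ^ 2 + 3 * lam1 * τ) + b0 ^ 2 * lam1 * (2 * B ^ 2 + 9 * lam1 * τ)))
    (u : ℝ → ℝ → ℝ)
    (hu : ∀ t x, u t x = 2 / (b0 * (1 + Real.exp (2 * α * (x + v * t))))) :
    ∀ t x, τ * pdtt u t x + B * pdt u t x - κ * pdxx u t x =
      lam1 * u t x + lam2 * u t x ^ 2 + lam3 * u t x ^ 3 := by
  -- constraint 1
  have hsq : Real.sqrt (lam2 ^ 2 - 4 * lam1 * lam3) ^ 2 = lam2 ^ 2 - 4 * lam1 * lam3 :=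
    Real.sq_sqrt hdisc
  have hl : lam1 * b0 = -lam2 + Real.sqrt (lam2 ^ 2 - 4 * lam1 * lam3) := by
    rw [hb0]; field_simp
  have h0 : lam1 * (lam1*b0^2 + 2*lam2*b0 + 4*lam3) = 0 := by
    linear_combination (lam1*b0 + lam2 + Real.sqrt (lam2 ^ 2 - 4 * lam1 * lam3)) * hl + hsq
  have hc1 : lam1*b0^2 + 2*lam2*b0 + 4*lam3 = 0 := (mul_eq_zero.mp h0).resolve_left h1
  -- constraint 2
  have h4 : (4 : ℝ) * B * v * b0 ≠ 0 :=
    mul_ne_zero (mul_ne_zero (mul_ne_zero four_ne_zero hB) hv) hb0ne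
  have hc2 : 4*B*v*b0*α + 3*lam1*b0 + 2*lam2 = 0 := by
    rw [hα]; field_simp; ring
  -- constraint 3
  have hden0 : 4 * lam2 ^ 2 * τ + 4 * b0 * lam2 * (B ^ 2 + 3 * lam1 * τ)
      + b0 ^ 2 * lam1 * (2 * B ^ 2 + 9 * lam1 * τ) ≠ 0 := by
    intro h
    rw [h, div_zero] at hveq
    exact hv (pow_eq_zero_iff two_ne_zero |>.mp hveq)
  have hq : v^2*(4*lam2^2*τ + 4*b0*lam2*(B^2+3*lam1*τ) + b0^2*lam1*(2*B^2+9*lam1*τ))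
      = κ*(2*lam2+3*b0*lam1)^2 := by
    rw [hveq, div_mul_cancel₀ _ hden0]
  have hc3 : 8*α^2*(κ - v^2*τ)*b0 = lam1*b0 + 2*lam2 := by
    have h0' : (2*B^2*v^2*b0) * (8*α^2*(κ - v^2*τ)*b0 - (lam1*b0 + 2*lam2)) = 0 := by
      linear_combination -hq + ((κ - v^2*τ)*(4*B*v*b0*α - 3*lam1*b0 - 2*lam2))*hc2
    have hne : (2*B^2*v^2*b0) ≠ 0 := by
      apply mul_ne_zero _ hb0ne
      positivity
    have h2 := (mul_eq_zero.mp h0').resolve_left hne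
    linarith [sub_eq_zero.mp h2]
  intro t x
  set E := Real.exp (2 * α * (x + v * t)) with hEdef
  have hEpos : 0 < E := Real.exp_pos _
  -- t-direction functions
  have hft : (fun s => u s x) = fun s => 2 / (b0 * (1 + Real.exp ((2*α*v) * s + 2*α*x))) := by
    funext s
    rw [hu, show 2 * α * (x + v * s) = (2*α*v) * s + 2*α*x by ring]
  have hargt : (2*α*v) * t + 2*α*x = 2 * α * (x + v * t) := by ring
  have hpdt : ∀ s, pdt u s x
      = -2 * (2*α*v) * Real.exp ((2*α*v) * s + 2*α*x)
        / (b0 * (1 + Real.exp ((2*α*v) * s + 2*α*x)) ^ 2) := by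
    intro s
    rw [pdt, hft]
    exact (hd1 b0 (2*α*v) (2*α*x) hb0ne s).deriv
  have hpdtt : pdtt u t x
      = -2 * (2*α*v) ^ 2 * E * (1 - E) / (b0 * (1 + E) ^ 3) := by
    rw [pdtt]
    have : (fun s => pdt u s x) = fun s => -2 * (2*α*v) * Real.exp ((2*α*v) * s + 2*α*x)
        / (b0 * (1 + Real.exp ((2*α*v) * s + 2*α*x)) ^ 2) := funext hpdt
    rw [this, (hd2 b0 (2*α*v) (2*α*x) hb0ne t).deriv, hargt]
  have hpdt' : pdt u t x = -2 * (2*α*v) * E / (b0 * (1 + E) ^ 2) := by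
    rw [hpdt t, hargt]
  -- x-direction functions
  have hfx : (fun y => u t y) = fun y => 2 / (b0 * (1 + Real.exp ((2*α) * y + 2*α*v*t))) := by
    funext y
    rw [hu, show 2 * α * (y + v * t) = (2*α) * y + 2*α*v*t by ring]
  have hargx : (2*α) * x + 2*α*v*t = 2 * α * (x + v * t) := by ring
  have hpdx : ∀ y, pdx u t y
      = -2 * (2*α) * Real.exp ((2*α) * y + 2*α*v*t)
        / (b0 * (1 + Real.exp ((2*α) * y + 2*α*v*t)) ^ 2) := by
    intro y
    rw [pdx, hfx]
    exact (hd1 b0 (2*α) (2*α*v*t) hb0ne y).deriv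
  have hpdxx : pdxx u t x
      = -2 * (2*α) ^ 2 * E * (1 - E) / (b0 * (1 + E) ^ 3) := by
    rw [pdxx]
    have : (fun y => pdx u t y) = fun y => -2 * (2*α) * Real.exp ((2*α) * y + 2*α*v*t)
        / (b0 * (1 + Real.exp ((2*α) * y + 2*α*v*t)) ^ 2) := funext hpdx
    rw [this, (hd2 b0 (2*α) (2*α*v*t) hb0ne x).deriv, hargx]
  have huE : u t x = 2 / (b0 * (1 + E)) := by rw [hu]
  rw [hpdtt, hpdt', hpdxx, huE]
  exact alg_key τ B κ lam1 lam2 lam3 b0 α v E hb0ne hEpos hc1 hc2 hc3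
end

section
/- Let Δ = a₁b₀ − a₀b₁ ≠ 0 and Θ = a₁b₀ + a₀b₁, h = α(v²τ − κ), b₀b₁ ≠ 0. Define λ₀ = −a₀a₁α(BvΔ + hΘ)/Δ², λ₁ = [αb₀b₁(BvΘΔ + hΘ²) + λ₃a₀a₁Δ²]/(b₀b₁Δ²), λ₂ = −[αb₀²b₁²(BvΔ + hΘ) + λ₃Δ²Θ]/(b₀b₁Δ²), A = −[−2hαb₀²b₁² + λ₃Δ²]/(αb₀b₁Δ) with α ≠ 0. Then u(t,x) = (a₀ + a₁e^{α(x+vt)})/(b₀ + b₁e^{α(x+vt)}) satisfies τ·u_tt + A·u·u_x + B·u_t − κ·u_xx = λ₀ + λ₁u + λ₂u² + λ₃u³ on the region where b₀ + b₁e^{α(x+vt)} ≠ 0. -/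
private lemma expDeriv (c d s : ℝ) :
    HasDerivAt (fun s : ℝ => Real.exp (c * s + d)) (Real.exp (c * s + d) * c) s := by
  have h1 : HasDerivAt (fun s : ℝ => c * s + d) c s := by
    simpa using ((hasDerivAt_id s).const_mul c).add_const d
  exact (Real.hasDerivAt_exp (c * s + d)).comp s h1

private lemma uDeriv (a0 a1 b0 b1 c d s : ℝ)
    (hD : b0 + b1 * Real.exp (c * s + d) ≠ 0) :
    HasDerivAt (fun s => (a0 + a1 * Real.exp (c * s + d)) / (b0 + b1 * Real.exp (c * s + d)))
      (c * Real.exp (c * s + d) * (a1 * b0 - a0 * b1) /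
        (b0 + b1 * Real.exp (c * s + d)) ^ 2) s := by
  have hnum : HasDerivAt (fun s => a0 + a1 * Real.exp (c * s + d))
      (a1 * (Real.exp (c * s + d) * c)) s := ((expDeriv c d s).const_mul a1).const_add a0
  have hden : HasDerivAt (fun s => b0 + b1 * Real.exp (c * s + d))
      (b1 * (Real.exp (c * s + d) * c)) s := ((expDeriv c d s).const_mul b1).const_add b0
  have := hnum.div hden hD
  refine this.congr_deriv ?_
  field_simp
  ring

private lemma uDeriv2 (a0 a1 b0 b1 c d s : ℝ)
    (hD : b0 + b1 * Real.exp (c * s + d) ≠ 0) :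
    HasDerivAt (fun s => c * Real.exp (c * s + d) * (a1 * b0 - a0 * b1) /
        (b0 + b1 * Real.exp (c * s + d)) ^ 2)
      (c ^ 2 * Real.exp (c * s + d) * (a1 * b0 - a0 * b1) *
        (b0 - b1 * Real.exp (c * s + d)) / (b0 + b1 * Real.exp (c * s + d)) ^ 3) s := by
  have hnum : HasDerivAt (fun s => c * Real.exp (c * s + d) * (a1 * b0 - a0 * b1))
      (c * (Real.exp (c * s + d) * c) * (a1 * b0 - a0 * b1)) s := by
    simpa [mul_comm, mul_assoc, mul_left_comm] using
      ((expDeriv c d s).const_mul (c * (a1 * b0 - a0 * b1)))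
  have hden0 : HasDerivAt (fun s => b0 + b1 * Real.exp (c * s + d))
      (b1 * (Real.exp (c * s + d) * c)) s := ((expDeriv c d s).const_mul b1).const_add b0
  have hden : HasDerivAt (fun s => (b0 + b1 * Real.exp (c * s + d)) ^ 2)
      (2 * (b0 + b1 * Real.exp (c * s + d)) ^ 1 * (b1 * (Real.exp (c * s + d) * c))) s :=
    hden0.pow 2
  have hD2 : (b0 + b1 * Real.exp (c * s + d)) ^ 2 ≠ 0 := pow_ne_zero 2 hD
  have := hnum.div hden hD2
  refine this.congr_deriv ?_
  field_simp
  ring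

theorem stmt_2 (τ B κ lam3 v a0 a1 b0 b1 α : ℝ)
    (hα : α ≠ 0) (hb : b0 * b1 ≠ 0)
    (Δ Θ h A lam0 lam1 lam2 : ℝ)
    (hΔ : Δ = a1 * b0 - a0 * b1) (hΔne : Δ ≠ 0)
    (hΘ : Θ = a1 * b0 + a0 * b1)
    (hh : h = α * (v ^ 2 * τ - κ))
    (hlam0 : lam0 = -(a0 * a1 * α) / Δ ^ 2 * (B * v * Δ + h * Θ))
    (hlam1 : lam1 = (α * b0 * b1 * (B * v * Θ * Δ + h * Θ ^ 2) + lam3 * a0 * a1 * Δ ^ 2) / (b0 * b1 * Δ ^ 2))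
    (hlam2 : lam2 = -(α * b0 ^ 2 * b1 ^ 2 * (B * v * Δ + h * Θ) + lam3 * Δ ^ 2 * Θ) / (b0 * b1 * Δ ^ 2))
    (hA : A = -(-2 * h * α * b0 ^ 2 * b1 ^ 2 + lam3 * Δ ^ 2) / (α * b0 * b1 * Δ))
    (u : ℝ → ℝ → ℝ)
    (hu : ∀ t x, u t x = (a0 + a1 * Real.exp (α * (x + v * t))) / (b0 + b1 * Real.exp (α * (x + v * t)))) :
    ∀ t x, b0 + b1 * Real.exp (α * (x + v * t)) ≠ 0 →
      τ * pdtt u t x + A * u t x * pdx u t x + B * pdt u t x - κ * pdxx u t x =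
        lam0 + lam1 * u t x + lam2 * u t x ^ 2 + lam3 * u t x ^ 3 := by
  intro t x hD
  set E := Real.exp (α * (x + v * t)) with hE
  -- t-direction: argument α*(x+v*s) = (α*v)*s + α*x
  have harg_t : ∀ s : ℝ, α * (x + v * s) = α * v * s + α * x := fun s => by ring
  have harg_x : ∀ y : ℝ, α * (y + v * t) = α * y + α * v * t := fun y => by ring
  have hEt : Real.exp (α * v * t + α * x) = E := by rw [hE, harg_t]
  have hEx : Real.exp (α * x + α * v * t) = E := by rw [hE, harg_x]
  have hDt : b0 + b1 * Real.exp (α * v * t + α * x) ≠ 0 := by rw [hEt]; exact hD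
  have hDx : b0 + b1 * Real.exp (α * x + α * v * t) ≠ 0 := by rw [hEx]; exact hD
  -- first derivatives
  have hpdt : pdt u t x = α * v * E * (a1 * b0 - a0 * b1) / (b0 + b1 * E) ^ 2 := by
    have : pdt u t x = deriv (fun s => (a0 + a1 * Real.exp (α * v * s + α * x)) /
        (b0 + b1 * Real.exp (α * v * s + α * x))) t := by
      unfold pdt
      congr 1
      funext s
      rw [hu, harg_t]
    rw [this, (uDeriv a0 a1 b0 b1 (α * v) (α * x) t hDt).deriv, hEt]
  have hpdx : pdx u t x = α * E * (a1 * b0 - a0 * b1) / (b0 + b1 * E) ^ 2 := by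
    have : pdx u t x = deriv (fun y => (a0 + a1 * Real.exp (α * y + α * v * t)) /
        (b0 + b1 * Real.exp (α * y + α * v * t))) x := by
      unfold pdx
      congr 1
      funext y
      rw [hu, harg_x]
    rw [this, (uDeriv a0 a1 b0 b1 α (α * v * t) x hDx).deriv, hEx]
  -- second derivatives: need pdt/pdx equal to the formula eventually
  have hcont_t : ContinuousAt (fun s : ℝ => b0 + b1 * Real.exp (α * v * s + α * x)) t := by
    fun_prop
  have hev_t : ∀ᶠ s in nhds t, b0 + b1 * Real.exp (α * v * s + α * x) ≠ 0 :=
    hcont_t.eventually_ne hDt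
  have hpdtt : pdtt u t x = (α * v) ^ 2 * E * (a1 * b0 - a0 * b1) * (b0 - b1 * E) /
      (b0 + b1 * E) ^ 3 := by
    have heq : (fun s => pdt u s x) =ᶠ[nhds t]
        (fun s => α * v * Real.exp (α * v * s + α * x) * (a1 * b0 - a0 * b1) /
          (b0 + b1 * Real.exp (α * v * s + α * x)) ^ 2) := by
      filter_upwards [hev_t] with s hs
      have : pdt u s x = deriv (fun s' => (a0 + a1 * Real.exp (α * v * s' + α * x)) /
          (b0 + b1 * Real.exp (α * v * s' + α * x))) s := by
        unfold pdt
        congr 1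
        funext s'
        rw [hu, harg_t]
      rw [this, (uDeriv a0 a1 b0 b1 (α * v) (α * x) s hs).deriv]
    unfold pdtt
    rw [heq.deriv_eq, (uDeriv2 a0 a1 b0 b1 (α * v) (α * x) t hDt).deriv, hEt]
  have hcont_x : ContinuousAt (fun y : ℝ => b0 + b1 * Real.exp (α * y + α * v * t)) x := by
    fun_prop
  have hev_x : ∀ᶠ y in nhds x, b0 + b1 * Real.exp (α * y + α * v * t) ≠ 0 :=
    hcont_x.eventually_ne hDx
  have hpdxx : pdxx u t x = α ^ 2 * E * (a1 * b0 - a0 * b1) * (b0 - b1 * E) /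
      (b0 + b1 * E) ^ 3 := by
    have heq : (fun y => pdx u t y) =ᶠ[nhds x]
        (fun y => α * Real.exp (α * y + α * v * t) * (a1 * b0 - a0 * b1) /
          (b0 + b1 * Real.exp (α * y + α * v * t)) ^ 2) := by
      filter_upwards [hev_x] with y hy
      have : pdx u t y = deriv (fun y' => (a0 + a1 * Real.exp (α * y' + α * v * t)) /
          (b0 + b1 * Real.exp (α * y' + α * v * t))) y := by
        unfold pdx
        congr 1
        funext y'
        rw [hu, harg_x]
      rw [this, (uDeriv a0 a1 b0 b1 α (α * v * t) y hy).deriv]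
    unfold pdxx
    rw [heq.deriv_eq, (uDeriv2 a0 a1 b0 b1 α (α * v * t) x hDx).deriv, hEx]
  -- now pure algebra
  have hb0 : b0 ≠ 0 := fun h' => hb (by rw [h']; ring)
  have hb1 : b1 ≠ 0 := fun h' => hb (by rw [h']; ring)
  rw [hpdtt, hpdxx, hpdt, hpdx, hu t x]
  rw [hE.symm] -- ensure E used
  subst hΔ hΘ hh hlam0 hlam1 hlam2 hA
  have hD' : b0 + E * b1 ≠ 0 := by rwa [mul_comm E b1]
  field_simp
  ring
end

section
/- The function u(t,x) = [(a₀ + a₁e^{α(x+vt)})/(b₀ + b₁e^{α(x+vt)})]² satisfies τ·u_tt + B·u_t − κ·u_xx = λ₀ + λ_{1/2}·√u + λ₁·u + λ_{3/2}·u^{3/2} + λ₂·u², where h = α(v²τ−κ), Δ = a₁b₀−a₀b₁ ≠ 0, Θ = a₁b₀+a₀b₁, and λ₀ = 2a₀²a₁²αh/Δ², λ_{1/2} = −2a₀a₁α(3hΘ + BvΔ)/Δ², λ₁ = 2α(h(3Θ² − Δ²) + BvΔΘ)/Δ², λ_{3/2} = −2b₀b₁α(5hΘ + BvΔ)/Δ²,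 λ₂ = 6b₀²b₁²hα/Δ², provided the quotient (a₀ + a₁e^{α(x+vt)})/(b₀ + b₁e^{α(x+vt)}) is nonnegative and b₀ + b₁e^{α(x+vt)} ≠ 0 on the region considered. -/
section helpers
variable (a0 a1 b0 b1 c d : ℝ)

lemma key1 (s : ℝ) (hD : b0 + b1 * Real.exp (c * s + d) ≠ 0) :
    deriv (fun r => ((a0 + a1 * Real.exp (c * r + d)) / (b0 + b1 * Real.exp (c * r + d))) ^ 2) s
      = 2 * c * (a1 * b0 - a0 * b1) * Real.exp (c * s + d) * (a0 + a1 * Real.exp (c * s + d))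
          / (b0 + b1 * Real.exp (c * s + d)) ^ 3 := by
  have harg : HasDerivAt (fun r : ℝ => c * r + d) c s := by
    simpa using ((hasDerivAt_id s).const_mul c).add_const d
  have hE : HasDerivAt (fun r : ℝ => Real.exp (c * r + d)) (Real.exp (c * s + d) * c) s :=
    harg.exp
  have hN : HasDerivAt (fun r : ℝ => a0 + a1 * Real.exp (c * r + d))
      (a1 * (Real.exp (c * s + d) * c)) s := (hE.const_mul a1).const_add a0
  have hDd : HasDerivAt (fun r : ℝ => b0 + b1 * Real.exp (c * r + d))
      (b1 * (Real.exp (c * s + d) * c)) s := (hE.const_mul b1).const_add b0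
  have hq : HasDerivAt (fun r : ℝ => (a0 + a1 * Real.exp (c * r + d)) / (b0 + b1 * Real.exp (c * r + d))) _ s := hN.div hDd hD
  have hphi : HasDerivAt (fun r : ℝ => ((a0 + a1 * Real.exp (c * r + d)) / (b0 + b1 * Real.exp (c * r + d))) ^ 2) _ s := hq.pow 2
  rw [hphi.deriv]
  norm_num only
  field_simp
  ring

lemma key2 (s : ℝ) (hD : b0 + b1 * Real.exp (c * s + d) ≠ 0) :
    deriv (deriv (fun r => ((a0 + a1 * Real.exp (c * r + d)) / (b0 + b1 * Real.exp (c * r + d))) ^ 2)) s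
      = 2 * c ^ 2 * (a1 * b0 - a0 * b1) * Real.exp (c * s + d)
          * ((a0 + 2 * a1 * Real.exp (c * s + d)) * (b0 + b1 * Real.exp (c * s + d))
              - 3 * b1 * Real.exp (c * s + d) * (a0 + a1 * Real.exp (c * s + d)))
          / (b0 + b1 * Real.exp (c * s + d)) ^ 4 := by
  have hDcont : Continuous fun r : ℝ => b0 + b1 * Real.exp (c * r + d) := by
    continuity
  have hev : ∀ᶠ r in nhds s, b0 + b1 * Real.exp (c * r + d) ≠ 0 :=
    hDcont.continuousAt.eventually_ne hD
  have heq : deriv (fun r => ((a0 + a1 * Real.exp (c * r + d)) / (b0 + b1 * Real.exp (c * r + d))) ^ 2)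
      =ᶠ[nhds s] fun r => 2 * c * (a1 * b0 - a0 * b1) * Real.exp (c * r + d)
          * (a0 + a1 * Real.exp (c * r + d)) / (b0 + b1 * Real.exp (c * r + d)) ^ 3 :=
    hev.mono fun r hr => key1 a0 a1 b0 b1 c d r hr
  rw [heq.deriv_eq]
  have harg : HasDerivAt (fun r : ℝ => c * r + d) c s := by
    simpa using ((hasDerivAt_id s).const_mul c).add_const d
  have hE : HasDerivAt (fun r : ℝ => Real.exp (c * r + d)) (Real.exp (c * s + d) * c) s :=
    harg.exp
  have hN : HasDerivAt (fun r : ℝ => a0 + a1 * Real.exp (c * r + d))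
      (a1 * (Real.exp (c * s + d) * c)) s := (hE.const_mul a1).const_add a0
  have hDd : HasDerivAt (fun r : ℝ => b0 + b1 * Real.exp (c * r + d))
      (b1 * (Real.exp (c * s + d) * c)) s := (hE.const_mul b1).const_add b0
  have hnum : HasDerivAt (fun r : ℝ => 2 * c * (a1 * b0 - a0 * b1) * Real.exp (c * r + d)
      * (a0 + a1 * Real.exp (c * r + d)))
      (Real.exp (c * s + d) * c * (2 * c * (a1 * b0 - a0 * b1)) * (a0 + a1 * Real.exp (c * s + d))
        + 2 * c * (a1 * b0 - a0 * b1) * Real.exp (c * s + d) * (a1 * (Real.exp (c * s + d) * c))) s := by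
    exact ((hE.const_mul (2 * c * (a1 * b0 - a0 * b1))).mul hN).congr_deriv (by ring)
  have hden : HasDerivAt (fun r : ℝ => (b0 + b1 * Real.exp (c * r + d)) ^ 3)
      (3 * (b0 + b1 * Real.exp (c * s + d)) ^ 2 * (b1 * (Real.exp (c * s + d) * c))) s := by
    exact hDd.pow 3
  have hfull : HasDerivAt (fun r : ℝ => 2 * c * (a1 * b0 - a0 * b1) * Real.exp (c * r + d)
      * (a0 + a1 * Real.exp (c * r + d)) / (b0 + b1 * Real.exp (c * r + d)) ^ 3) _ s :=
    hnum.div hden (pow_ne_zero 3 hD)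
  rw [hfull.deriv]
  field_simp
  ring
end helpers

theorem stmt_3 (τ B κ v a0 a1 b0 b1 α : ℝ)
    (Δ Θ h lam0 lamhalf lam1 lam3half lam2 : ℝ)
    (hΔ : Δ = a1 * b0 - a0 * b1) (hΔne : Δ ≠ 0)
    (hΘ : Θ = a1 * b0 + a0 * b1)
    (hh : h = α * (v ^ 2 * τ - κ))
    (hlam0 : lam0 = 2 * a0 ^ 2 * a1 ^ 2 * α * h / Δ ^ 2)
    (hlamhalf : lamhalf = -2 * a0 * a1 * α * (3 * h * Θ + B * v * Δ) / Δ ^ 2)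
    (hlam1 : lam1 = 2 * α * (h * (3 * Θ ^ 2 - Δ ^ 2) + B * v * Δ * Θ) / Δ ^ 2)
    (hlam3half : lam3half = -2 * b0 * b1 * α * (5 * h * Θ + B * v * Δ) / Δ ^ 2)
    (hlam2 : lam2 = 6 * b0 ^ 2 * b1 ^ 2 * h * α / Δ ^ 2)
    (u : ℝ → ℝ → ℝ)
    (hu : ∀ t x, u t x =
      ((a0 + a1 * Real.exp (α * (x + v * t))) / (b0 + b1 * Real.exp (α * (x + v * t)))) ^ 2) :
    ∀ t x, b0 + b1 * Real.exp (α * (x + v * t)) ≠ 0 →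
      0 ≤ (a0 + a1 * Real.exp (α * (x + v * t))) / (b0 + b1 * Real.exp (α * (x + v * t))) →
      τ * pdtt u t x + B * pdt u t x - κ * pdxx u t x =
        lam0 + lamhalf * Real.sqrt (u t x) + lam1 * u t x
          + lam3half * u t x * Real.sqrt (u t x) + lam2 * u t x ^ 2 := by
  intro t x hDne hq0
  have et : ∀ s : ℝ, α * (x + v * s) = (α * v) * s + α * x := fun s => by ring
  have ex : ∀ y : ℝ, α * (y + v * t) = α * y + α * v * t := fun y => by ring
  -- t-direction functions
  have hft : (fun s => u s x) = fun s =>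
      ((a0 + a1 * Real.exp ((α * v) * s + α * x)) / (b0 + b1 * Real.exp ((α * v) * s + α * x))) ^ 2 := by
    funext s; rw [hu, et]
  have hfx : (fun y => u t y) = fun y =>
      ((a0 + a1 * Real.exp (α * y + α * v * t)) / (b0 + b1 * Real.exp (α * y + α * v * t))) ^ 2 := by
    funext y; rw [hu, ex]
  have hDt : b0 + b1 * Real.exp ((α * v) * t + α * x) ≠ 0 := by rw [← et]; exact hDne
  have hDx : b0 + b1 * Real.exp (α * x + α * v * t) ≠ 0 := by rw [← ex]; exact hDne
  have hpdt : pdt u t x = 2 * (α * v) * (a1 * b0 - a0 * b1) * Real.exp (α * (x + v * t))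
      * (a0 + a1 * Real.exp (α * (x + v * t))) / (b0 + b1 * Real.exp (α * (x + v * t))) ^ 3 := by
    rw [pdt, hft, key1 a0 a1 b0 b1 (α * v) (α * x) t hDt, et]
  have hpdttfun : (fun s => pdt u s x) = deriv (fun s =>
      ((a0 + a1 * Real.exp ((α * v) * s + α * x)) / (b0 + b1 * Real.exp ((α * v) * s + α * x))) ^ 2) := by
    funext s; rw [pdt, hft]
  have hpdtt : pdtt u t x = 2 * (α * v) ^ 2 * (a1 * b0 - a0 * b1) * Real.exp (α * (x + v * t))
      * ((a0 + 2 * a1 * Real.exp (α * (x + v * t))) * (b0 + b1 * Real.exp (α * (x + v * t)))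
          - 3 * b1 * Real.exp (α * (x + v * t)) * (a0 + a1 * Real.exp (α * (x + v * t))))
      / (b0 + b1 * Real.exp (α * (x + v * t))) ^ 4 := by
    rw [pdtt, hpdttfun, key2 a0 a1 b0 b1 (α * v) (α * x) t hDt, et]
  have hpdxxfun : (fun y => pdx u t y) = deriv (fun y =>
      ((a0 + a1 * Real.exp (α * y + α * v * t)) / (b0 + b1 * Real.exp (α * y + α * v * t))) ^ 2) := by
    funext y; rw [pdx, hfx]
  have hpdxx : pdxx u t x = 2 * α ^ 2 * (a1 * b0 - a0 * b1) * Real.exp (α * (x + v * t))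
      * ((a0 + 2 * a1 * Real.exp (α * (x + v * t))) * (b0 + b1 * Real.exp (α * (x + v * t)))
          - 3 * b1 * Real.exp (α * (x + v * t)) * (a0 + a1 * Real.exp (α * (x + v * t))))
      / (b0 + b1 * Real.exp (α * (x + v * t))) ^ 4 := by
    rw [pdxx, hpdxxfun, key2 a0 a1 b0 b1 α (α * v * t) x hDx, ex]
  have hsqrt : Real.sqrt (u t x)
      = (a0 + a1 * Real.exp (α * (x + v * t))) / (b0 + b1 * Real.exp (α * (x + v * t))) := by
    rw [hu, Real.sqrt_sq hq0]
  subst hΔ hΘ hh hlam0 hlamhalf hlam1 hlam3half hlam2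
  rw [hpdt, hpdtt, hpdxx, hsqrt, hu]
  field_simp
  ring
end

section
/- Suppose λ₁ > 0, λ₃ < 0, and δ = τv² − κ > 0. Then u(t,x) = sqrt(−2λ₁/λ₃)·sech(sqrt(λ₁/δ)·(x+vt)) satisfies τ·u_tt − κ·u_xx = λ₁u + λ₃u³. -/
theorem stmt_5 (τ κ lam1 lam3 v δ : ℝ)
    (hlam1 : lam1 > 0) (hlam3 : lam3 < 0) (hδ : δ = τ * v ^ 2 - κ) (hδpos : δ > 0)
    (u : ℝ → ℝ → ℝ)
    (hu : ∀ t x, u t x =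
      Real.sqrt (-2 * lam1 / lam3) * (1 / Real.cosh (Real.sqrt (lam1 / δ) * (x + v * t)))) :
    ∀ t x, τ * pdtt u t x - κ * pdxx u t x = lam1 * u t x + lam3 * u t x ^ 3 := by
  set A := Real.sqrt (-2 * lam1 / lam3) with hA
  set k := Real.sqrt (lam1 / δ) with hk
  have hl3 : lam3 ≠ 0 := ne_of_lt hlam3
  have hδ0 : δ ≠ 0 := ne_of_gt hδpos
  have hA2 : A ^ 2 = -2 * lam1 / lam3 := by
    rw [hA]; exact Real.sq_sqrt (le_of_lt (div_pos_iff.mpr (Or.inr ⟨by linarith, hlam3⟩)))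
  have hk2 : k ^ 2 = lam1 / δ := by
    rw [hk]; exact Real.sq_sqrt (le_of_lt (div_pos hlam1 hδpos))
  have key : ∀ y : ℝ, HasDerivAt (fun z => (Real.cosh z)⁻¹)
      (-Real.sinh y / Real.cosh y ^ 2) y := fun y =>
    (Real.hasDerivAt_cosh y).inv (Real.cosh_pos y).ne'
  have key2 : ∀ y : ℝ, HasDerivAt (fun z => -Real.sinh z / Real.cosh z ^ 2)
      ((-Real.cosh y * Real.cosh y ^ 2 - -Real.sinh y * (2 * Real.cosh y ^ 1 * Real.sinh y)) /
        (Real.cosh y ^ 2) ^ 2) y := fun y =>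
    ((Real.hasDerivAt_sinh y).neg).div ((Real.hasDerivAt_cosh y).pow 2) (by positivity)
  have hpdt : ∀ t x, pdt u t x =
      A * (-Real.sinh (k * (x + v * t)) / Real.cosh (k * (x + v * t)) ^ 2) * (k * v) := by
    intro t x
    have hθ : HasDerivAt (fun s : ℝ => k * (x + v * s)) (k * v) t := by
      simpa using (((hasDerivAt_id t).const_mul v).const_add x).const_mul k
    have h := ((key (k * (x + v * t))).comp t hθ).const_mul A
    have heq : (fun s => u s x) = fun s => A * (Real.cosh (k * (x + v * s)))⁻¹ := by
      funext s; rw [hu]; rw [one_div]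
    simp only [Function.comp] at h
    rw [pdt, heq, h.deriv]; ring
  have hpdx : ∀ t x, pdx u t x =
      A * (-Real.sinh (k * (x + v * t)) / Real.cosh (k * (x + v * t)) ^ 2) * k := by
    intro t x
    have hθ : HasDerivAt (fun y : ℝ => k * (y + v * t)) k x := by
      simpa using ((hasDerivAt_id x).add_const (v * t)).const_mul k
    have h := ((key (k * (x + v * t))).comp x hθ).const_mul A
    have heq : (fun y => u t y) = fun y => A * (Real.cosh (k * (y + v * t)))⁻¹ := by
      funext y; rw [hu]; rw [one_div]
    simp only [Function.comp] at h
    rw [pdx, heq, h.deriv]; ring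
  intro t x
  set θ := k * (x + v * t) with hθdef
  have hθt : HasDerivAt (fun s : ℝ => k * (x + v * s)) (k * v) t := by
    simpa using (((hasDerivAt_id t).const_mul v).const_add x).const_mul k
  have hθx : HasDerivAt (fun y : ℝ => k * (y + v * t)) k x := by
    simpa using ((hasDerivAt_id x).add_const (v * t)).const_mul k
  have D := (-Real.cosh θ * Real.cosh θ ^ 2 - -Real.sinh θ * (2 * Real.cosh θ ^ 1 * Real.sinh θ)) /
        (Real.cosh θ ^ 2) ^ 2
  have hpdtt : pdtt u t x =
      A * ((-Real.cosh θ * Real.cosh θ ^ 2 - -Real.sinh θ * (2 * Real.cosh θ ^ 1 * Real.sinh θ)) /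
        (Real.cosh θ ^ 2) ^ 2 * (k * v)) * (k * v) := by
    have heq : (fun s => pdt u s x) =
        fun s => A * (-Real.sinh (k * (x + v * s)) / Real.cosh (k * (x + v * s)) ^ 2) * (k * v) := by
      funext s; exact hpdt s x
    have h := (((key2 θ).comp t hθt).const_mul A).mul_const (k * v)
    simp only [Function.comp] at h
    rw [pdtt, heq, h.deriv]
  have hpdxx : pdxx u t x =
      A * ((-Real.cosh θ * Real.cosh θ ^ 2 - -Real.sinh θ * (2 * Real.cosh θ ^ 1 * Real.sinh θ)) /
        (Real.cosh θ ^ 2) ^ 2 * k) * k := by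
    have heq : (fun y => pdx u t y) =
        fun y => A * (-Real.sinh (k * (y + v * t)) / Real.cosh (k * (y + v * t)) ^ 2) * k := by
      funext y; exact hpdx t y
    have h := (((key2 θ).comp x hθx).const_mul A).mul_const k
    simp only [Function.comp] at h
    rw [pdxx, heq, h.deriv]
  rw [hpdtt, hpdxx, hu t x]
  set c := Real.cosh θ with hc
  set s := Real.sinh θ with hs
  have hcpos : 0 < c := Real.cosh_pos θ
  have hs2 : s ^ 2 = c ^ 2 - 1 := Real.sinh_sq θ
  have hl1 : k ^ 2 * δ = lam1 := by field_simp at hk2; linarith [hk2]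
  have hA2' : A ^ 2 * lam3 = -2 * lam1 := by field_simp at hA2; linarith [hA2]
  field_simp
  linear_combination (-A) * hA2' + (2*A*lam1) * hs2 + (A*(2*s^2 - c^2)) * hl1 + (-(A*(2*s^2 - c^2)*k^2)) * hδ
end

section
/- Suppose λ₁ > 0 and δ = τv² − κ > 0. Then u(t,x) = −(3λ₁/(2λ₂))·sech²(sqrt(λ₁/δ)·(x+vt)/2) satisfies τ·u_tt − κ·u_xx = λ₁u + λ₂u², provided λ₂ ≠ 0. -/
noncomputable def F (k c y : ℝ) : ℝ := k * (1 / Real.cosh (c * y)) ^ 2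
noncomputable def F1 (k c y : ℝ) : ℝ :=
  k * (2 * (Real.cosh (c * y))⁻¹ ^ 1 * (-(Real.sinh (c * y) * c) / Real.cosh (c * y) ^ 2))
noncomputable def F2 (k c y : ℝ) : ℝ :=
  (-2 * k * c) * (Real.cosh (c * y) * c * ((Real.cosh (c * y))⁻¹) ^ 3 +
    Real.sinh (c * y) * (3 * ((Real.cosh (c * y))⁻¹) ^ 2 *
      (-(Real.sinh (c * y) * c) / Real.cosh (c * y) ^ 2)))

lemma hF1 (k c y : ℝ) : HasDerivAt (F k c) (F1 k c y) y := by
  have hl : HasDerivAt (fun y : ℝ => c * y) c y := by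
    simpa using (hasDerivAt_id y).const_mul c
  have h1 : HasDerivAt (fun y => Real.cosh (c * y)) (Real.sinh (c * y) * c) y :=
    (Real.hasDerivAt_cosh (c * y)).comp y hl
  have h2 := (h1.inv (ne_of_gt (Real.cosh_pos _))).pow 2
  have h3 := h2.const_mul k
  have hfun : F k c = fun y => k * (Real.cosh (c * y))⁻¹ ^ 2 := by
    funext z; unfold F; rw [one_div]
  rw [hfun]
  exact h3.congr_deriv (by simp only [F1, Pi.inv_apply]; norm_num)

lemma hF2 (k c y : ℝ) : HasDerivAt (F1 k c) (F2 k c y) y := by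
  have hl : HasDerivAt (fun y : ℝ => c * y) c y := by
    simpa using (hasDerivAt_id y).const_mul c
  have h1 : HasDerivAt (fun y => Real.cosh (c * y)) (Real.sinh (c * y) * c) y :=
    (Real.hasDerivAt_cosh (c * y)).comp y hl
  have hs : HasDerivAt (fun y => Real.sinh (c * y)) (Real.cosh (c * y) * c) y :=
    (Real.hasDerivAt_sinh (c * y)).comp y hl
  have h2 := h1.inv (ne_of_gt (Real.cosh_pos _))
  have h3 := (hs.mul (h2.pow 3)).const_mul (-2 * k * c)
  have hfun : F1 k c = fun y => -2 * k * c * (Real.sinh (c * y) * (Real.cosh (c * y))⁻¹ ^ 3) := by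
    funext z; unfold F1
    have h := ne_of_gt (Real.cosh_pos (c * z))
    field_simp
  rw [hfun]
  exact h3.congr_deriv (by simp only [F2, Pi.inv_apply, Pi.pow_apply]; norm_num)

lemma alg (lam1 lam2 δ : ℝ) (hlam1 : lam1 > 0) (hlam2 : lam2 ≠ 0) (hδ : δ > 0) (y : ℝ) :
    δ * F2 (-(3 * lam1 / (2 * lam2))) (Real.sqrt (lam1 / δ) / 2) y =
      lam1 * F (-(3 * lam1 / (2 * lam2))) (Real.sqrt (lam1 / δ) / 2) y +
      lam2 * (F (-(3 * lam1 / (2 * lam2))) (Real.sqrt (lam1 / δ) / 2) y) ^ 2 := by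
  set c : ℝ := Real.sqrt (lam1 / δ) / 2 with hc
  have hc2 : c ^ 2 = lam1 / (4 * δ) := by
    rw [hc, div_pow, Real.sq_sqrt (le_of_lt (div_pos hlam1 hδ)), div_div]
    ring_nf
  set ch := Real.cosh (c * y) with hch
  set sh := Real.sinh (c * y) with hsh
  have hchpos : ch > 0 := Real.cosh_pos _
  have hsq : sh ^ 2 = ch ^ 2 - 1 := Real.sinh_sq _
  unfold F F2
  rw [← hch, ← hsh]
  have hchne : ch ≠ 0 := ne_of_gt hchpos
  have hδne : δ ≠ 0 := ne_of_gt hδ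
  have hl1 : lam1 = 4 * δ * c ^ 2 := by
    rw [hc2]; field_simp
  rw [hl1]
  field_simp
  linear_combination (-3 / 4 * Real.sqrt (lam1 / δ) ^ 4) * hsq

theorem stmt_7 (τ κ lam1 lam2 v δ : ℝ)
    (hlam1 : lam1 > 0) (hlam2 : lam2 ≠ 0) (hδ : δ = τ * v ^ 2 - κ) (hδpos : δ > 0)
    (u : ℝ → ℝ → ℝ)
    (hu : ∀ t x, u t x =
      -(3 * lam1 / (2 * lam2)) * (1 / Real.cosh (Real.sqrt (lam1 / δ) * (x + v * t) / 2)) ^ 2) :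
    ∀ t x, τ * pdtt u t x - κ * pdxx u t x = lam1 * u t x + lam2 * u t x ^ 2 := by
  intro t x
  set k : ℝ := -(3 * lam1 / (2 * lam2)) with hk
  set c : ℝ := Real.sqrt (lam1 / δ) / 2 with hc
  have huf : ∀ t x, u t x = F k c (x + v * t) := by
    intro t x
    rw [hu t x]
    unfold F
    rw [show c * (x + v * t) = Real.sqrt (lam1 / δ) * (x + v * t) / 2 by rw [hc]; ring]
  -- t-derivatives
  have hline : ∀ s : ℝ, HasDerivAt (fun s : ℝ => x + v * s) v s := by
    intro s
    simpa using ((hasDerivAt_id s).const_mul v).const_add x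
  have hpdt : ∀ s : ℝ, pdt u s x = F1 k c (x + v * s) * v := by
    intro s
    have : (fun s => u s x) = fun s => F k c (x + v * s) := funext fun s => huf s x
    unfold pdt
    rw [this]
    exact (((hF1 k c (x + v * s)).comp s (hline s))).deriv
  have hpdtt : pdtt u t x = F2 k c (x + v * t) * v * v := by
    unfold pdtt
    have : (fun s => pdt u s x) = fun s => F1 k c (x + v * s) * v := funext hpdt
    rw [this]
    exact (((hF2 k c (x + v * t)).comp t (hline t)).mul_const v).deriv
  -- x-derivatives
  have hlinex : ∀ z : ℝ, HasDerivAt (fun z : ℝ => z + v * t) 1 z := by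
    intro z
    simpa using (hasDerivAt_id z).add_const (v * t)
  have hpdx : ∀ z : ℝ, pdx u t z = F1 k c (z + v * t) * 1 := by
    intro z
    have : (fun y => u t y) = fun y => F k c (y + v * t) := funext fun y => huf t y
    unfold pdx
    rw [this]
    exact ((hF1 k c (z + v * t)).comp z (hlinex z)).deriv
  have hpdxx : pdxx u t x = F2 k c (x + v * t) * 1 * 1 := by
    unfold pdxx
    have : (fun y => pdx u t y) = fun y => F1 k c (y + v * t) * 1 := funext hpdx
    rw [this]
    exact (((hF2 k c (x + v * t)).comp x (hlinex x)).mul_const 1).deriv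
  rw [hpdtt, hpdxx, huf t x]
  have key := alg lam1 lam2 δ hlam1 hlam2 hδpos (x + v * t)
  rw [← hk, ← hc] at key
  calc τ * (F2 k c (x + v * t) * v * v) - κ * (F2 k c (x + v * t) * 1 * 1)
      = δ * F2 k c (x + v * t) := by rw [hδ]; ring
    _ = lam1 * F k c (x + v * t) + lam2 * (F k c (x + v * t)) ^ 2 := key
end
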